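/- arXiv:1610.09289 — 2 statements merged into one kernel-verified Lean document; each statement's English description precedes it below -/
import Mathlib

section
/- Let X, Y, U be random variables on finite alphabets, with X and Y real-valued where Pearson correlation is used. Then 0 ≤ |ρ(X;Y|U)| ≤ θ(X;Y|U) ≤ ρ_m(X;Y|U) ≤ 1. Moreover: (i) ρ_m(X;Y|U) = 0 if and only if X and Y are conditionally independent given U; (ii) ρ_m(X;Y|U) = 1 if and only if there exist functions f, g with f(X,U) = g(Y,U) almost surely and H(f(X,U)|U) > 0 (i.e., X and Y have nonzero Gács–Körner common information given U). -/
open scoped BigOperators Classical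

noncomputable section

namespace GCI

/-- A bundled finite alphabet. -/
structure FinAlph : Type 1 where
  carrier : Type
  [fin : Fintype carrier]

instance : CoeSort FinAlph Type := ⟨FinAlph.carrier⟩
instance (A : FinAlph) : Fintype A := A.fin

variable {Ω : Type} [Fintype Ω]

/-- `p` is a probability mass function on the finite sample space `Ω`. -/
def IsPMF (p : Ω → ℝ) : Prop := (∀ ω, 0 ≤ p ω) ∧ ∑ ω, p ω = 1

/-- Expectation of a real random variable `f` under the pmf `p`. -/
def expec (p : Ω → ℝ) (f : Ω → ℝ) : ℝ := ∑ ω, p ω * f ω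

/-- Marginal pmf of the random variable `X` under `p`. -/
def marg {𝒳 : Type} (p : Ω → ℝ) (X : Ω → 𝒳) (x : 𝒳) : ℝ :=
  ∑ ω, if X ω = x then p ω else 0

/-- Conditional expectation `E[f | U = u]`. -/
def cexp {𝒰 : Type} (p : Ω → ℝ) (U : Ω → 𝒰) (u : 𝒰) (f : Ω → ℝ) : ℝ :=
  (∑ ω, if U ω = u then p ω * f ω else 0) / marg p U u

/-- `E[cov(f, g | U)]`. -/
def ccov {𝒰 : Type} (p : Ω → ℝ) (U : Ω → 𝒰) (f g : Ω → ℝ) : ℝ :=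
  expec p fun ω => (f ω - cexp p U (U ω) f) * (g ω - cexp p U (U ω) g)

/-- `E[var(f | U)]`. -/
def cvar {𝒰 : Type} (p : Ω → ℝ) (U : Ω → 𝒰) (f : Ω → ℝ) : ℝ := ccov p U f f

/-- Conditional Pearson correlation `ρ(f; g | U)`. -/
def ccorr {𝒰 : Type} (p : Ω → ℝ) (U : Ω → 𝒰) (f g : Ω → ℝ) : ℝ :=
  if 0 < cvar p U f * cvar p U g then
    ccov p U f g / (Real.sqrt (cvar p U f) * Real.sqrt (cvar p U g))
  else 0

/-- Conditional correlation ratio `θ(X; Y | U)` for a real-valued `X`. -/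
def cratio {𝒴 𝒰 : Type} (p : Ω → ℝ) (U : Ω → 𝒰) (X : Ω → ℝ) (Y : Ω → 𝒴) : ℝ :=
  ⨆ g : 𝒴 × 𝒰 → ℝ, ccorr p U X fun ω => g (Y ω, U ω)

/-- Conditional maximal correlation `ρ_m(X; Y | U)`. -/
def maxCorr {𝒳 𝒴 𝒰 : Type} (p : Ω → ℝ) (U : Ω → 𝒰) (X : Ω → 𝒳) (Y : Ω → 𝒴) : ℝ :=
  ⨆ f : 𝒳 × 𝒰 → ℝ, ⨆ g : 𝒴 × 𝒰 → ℝ,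
    ccorr p U (fun ω => f (X ω, U ω)) fun ω => g (Y ω, U ω)

/-- Unconditional Pearson correlation. -/
def corr0 (p : Ω → ℝ) (f g : Ω → ℝ) : ℝ := ccorr p (fun _ => ()) f g

/-- Unconditional correlation ratio `θ(X;Y)`. -/
def ratio0 {𝒴 : Type} (p : Ω → ℝ) (X : Ω → ℝ) (Y : Ω → 𝒴) : ℝ :=
  cratio p (fun _ => ()) X Y

/-- Unconditional maximal correlation `ρ_m(X;Y)`. -/
def maxCorr0 {𝒳 𝒴 : Type} (p : Ω → ℝ) (X : Ω → 𝒳) (Y : Ω → 𝒴) : ℝ :=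
  maxCorr p (fun _ => ()) X Y

/-- Shannon entropy (base 2) of the random variable `X` under `p`. -/
def ent {𝒳 : Type} [Fintype 𝒳] (p : Ω → ℝ) (X : Ω → 𝒳) : ℝ :=
  ∑ x, -(marg p X x * Real.logb 2 (marg p X x))

/-- Conditional Shannon entropy `H(X | U)`. -/
def condEnt {𝒳 𝒰 : Type} [Fintype 𝒳] [Fintype 𝒰] (p : Ω → ℝ) (X : Ω → 𝒳) (U : Ω → 𝒰) : ℝ :=
  ent p (fun ω => (X ω, U ω)) - ent p U

/-- Mutual information `I(X; U)`. -/
def mutInfo {𝒳 𝒰 : Type} [Fintype 𝒳] [Fintype 𝒰] (p : Ω → ℝ) (X : Ω → 𝒳) (U : Ω → 𝒰) : ℝ :=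
  ent p X + ent p U - ent p fun ω => (X ω, U ω)

/-- Almost-sure equality of two discrete random variables. -/
def AEEq {𝒱 : Type} (p : Ω → ℝ) (f g : Ω → 𝒱) : Prop := ∀ ω, 0 < p ω → f ω = g ω

/-- The Gács–Körner common information `C_GK(X;Y)`. -/
def CGK {𝒳 𝒴 : Type} (p : Ω → ℝ) (X : Ω → 𝒳) (Y : Ω → 𝒴) : ℝ :=
  sSup { r | ∃ (𝒱 : FinAlph) (f : 𝒳 → 𝒱) (g : 𝒴 → 𝒱),
    AEEq p (fun ω => f (X ω)) (fun ω => g (Y ω)) ∧ r = ent p fun ω => f (X ω) }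

/-- The conditional Gács–Körner common information `C_GK(X;Y|U)`. -/
def CGKcond {𝒳 𝒴 𝒰 : Type} [Fintype 𝒰] (p : Ω → ℝ) (X : Ω → 𝒳) (Y : Ω → 𝒴)
    (U : Ω → 𝒰) : ℝ :=
  sSup { r | ∃ (𝒱 : FinAlph) (f : 𝒳 × 𝒰 → 𝒱) (g : 𝒴 × 𝒰 → 𝒱),
    AEEq p (fun ω => f (X ω, U ω)) (fun ω => g (Y ω, U ω)) ∧
    r = condEnt p (fun ω => f (X ω, U ω)) U }

/-- The `β`-approximate common information (approximate information-correlation function). -/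
def Cbeta {𝒳 𝒴 : Type} [Fintype 𝒳] [Fintype 𝒴] (p : 𝒳 × 𝒴 → ℝ) (β : ℝ) : ℝ :=
  sInf { r | ∃ (𝒰 : FinAlph) (q : (𝒳 × 𝒴) × 𝒰 → ℝ),
    IsPMF q ∧ (∀ a, marg q Prod.fst a = p a) ∧
    maxCorr q Prod.snd (fun a => a.1.1) (fun a => a.1.2) ≤ β ∧
    r = mutInfo q Prod.fst Prod.snd }

/-- The `n`-th term in the definition of the `β`-exact common information:
the normalized smallest entropy of an auxiliary variable for `n` i.i.d. copies. -/
def KbetaN {𝒳 𝒴 : Type} [Fintype 𝒳] [Fintype 𝒴] (p : 𝒳 × 𝒴 → ℝ) (β : ℝ) (n : ℕ) : ℝ :=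
  sInf { r | ∃ (𝒰 : FinAlph) (q : ((Fin n → 𝒳) × (Fin n → 𝒴)) × 𝒰 → ℝ),
    IsPMF q ∧
    (∀ a : (Fin n → 𝒳) × (Fin n → 𝒴), marg q Prod.fst a = ∏ i, p (a.1 i, a.2 i)) ∧
    maxCorr q Prod.snd (fun a => a.1.1) (fun a => a.1.2) ≤ β ∧
    r = (1 / (n : ℝ)) * ent q Prod.snd }

/-- The `β`-exact common information (exact information-correlation function). -/
def Kbeta {𝒳 𝒴 : Type} [Fintype 𝒳] [Fintype 𝒴] (p : 𝒳 × 𝒴 → ℝ) (β : ℝ) : ℝ :=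
  Filter.limUnder Filter.atTop fun n => KbetaN p β n


set_option linter.unusedSectionVars false

section Aux

variable {Ω : Type} [Fintype Ω] {𝒰 : Type} [Fintype 𝒰]

lemma marg_nonneg {𝒳 : Type} (p : Ω → ℝ) (hp0 : ∀ ω, 0 ≤ p ω) (X : Ω → 𝒳) (x : 𝒳) :
    0 ≤ marg p X x := by
  apply Finset.sum_nonneg; intro ω _; split <;> simp [hp0 ω]

lemma le_marg {𝒳 : Type} (p : Ω → ℝ) (hp0 : ∀ ω, 0 ≤ p ω) (X : Ω → 𝒳) (ω : Ω) :
    p ω ≤ marg p X (X ω) := by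
  have : p ω = if X ω = X ω then p ω else 0 := by simp
  rw [this]
  apply Finset.single_le_sum (f := fun ω' => if X ω' = X ω then p ω' else 0)
    (fun ω' _ => by split <;> simp [hp0 ω']) (Finset.mem_univ ω)

lemma marg_pos {𝒳 : Type} (p : Ω → ℝ) (hp0 : ∀ ω, 0 ≤ p ω) (X : Ω → 𝒳) (ω : Ω)
    (hω : 0 < p ω) : 0 < marg p X (X ω) := lt_of_lt_of_le hω (le_marg p hp0 X ω)

lemma p_eq_zero_of_marg (p : Ω → ℝ) (hp0 : ∀ ω, 0 ≤ p ω) (U : Ω → 𝒰) {u : 𝒰}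
    (hm : marg p U u = 0) {ω : Ω} (h : U ω = u) : p ω = 0 := by
  have h1 := le_marg p hp0 U ω
  rw [h, hm] at h1
  exact le_antisymm h1 (hp0 ω)

lemma cexp_num (p : Ω → ℝ) (U : Ω → 𝒰) {u : 𝒰} (hm : marg p U u ≠ 0) (f : Ω → ℝ) :
    (∑ ω, if U ω = u then p ω * f ω else 0) = cexp p U u f * marg p U u := by
  rw [cexp, div_mul_cancel₀ _ hm]

lemma sum_centered (p : Ω → ℝ) (U : Ω → 𝒰) {u : 𝒰} (hm : marg p U u ≠ 0) (f : Ω → ℝ) :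
    (∑ ω, if U ω = u then p ω * (f ω - cexp p U u f) else 0) = 0 := by
  have : ∀ ω, (if U ω = u then p ω * (f ω - cexp p U u f) else 0)
      = (if U ω = u then p ω * f ω else 0) - (if U ω = u then p ω else 0) * cexp p U u f := by
    intro ω; split <;> ring
  rw [Finset.sum_congr rfl (fun ω _ => this ω), Finset.sum_sub_distrib,
    cexp_num p U hm f, ← Finset.sum_mul, ← marg]
  ring

end Aux
section Cvec

open scoped RealInnerProductSpace

variable {Ω : Type} [Fintype Ω] {𝒰 : Type} [Fintype 𝒰]

/-- The weighted, conditionally-centered vector associated to a random variable. -/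
def cvec (p : Ω → ℝ) (U : Ω → 𝒰) (f : Ω → ℝ) : EuclideanSpace ℝ Ω :=
  WithLp.toLp 2 fun ω => Real.sqrt (p ω) * (f ω - cexp p U (U ω) f)

lemma inner_cvec (p : Ω → ℝ) (hp0 : ∀ ω, 0 ≤ p ω) (U : Ω → 𝒰) (f g : Ω → ℝ) :
    ⟪cvec p U f, cvec p U g⟫ = ccov p U f g := by
  rw [ccov, expec]
  simp only [PiLp.inner_apply, RCLike.inner_apply, starRingEnd_apply, star_trivial, cvec, PiLp.toLp_apply]
  apply Finset.sum_congr rfl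
  intro ω _
  have h : Real.sqrt (p ω) * Real.sqrt (p ω) = p ω := Real.mul_self_sqrt (hp0 ω)
  calc Real.sqrt (p ω) * (g ω - cexp p U (U ω) g) * (Real.sqrt (p ω) * (f ω - cexp p U (U ω) f))
      = Real.sqrt (p ω) * Real.sqrt (p ω) *
        ((f ω - cexp p U (U ω) f) * (g ω - cexp p U (U ω) g)) := by ring
    _ = _ := by rw [h]

lemma norm_cvec_sq (p : Ω → ℝ) (hp0 : ∀ ω, 0 ≤ p ω) (U : Ω → 𝒰) (f : Ω → ℝ) :
    ‖cvec p U f‖ ^ 2 = cvar p U f := by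
  rw [← real_inner_self_eq_norm_sq, inner_cvec p hp0, cvar]

lemma cvar_nonneg (p : Ω → ℝ) (hp0 : ∀ ω, 0 ≤ p ω) (U : Ω → 𝒰) (f : Ω → ℝ) :
    0 ≤ cvar p U f := by
  rw [← norm_cvec_sq p hp0 U f]; positivity

lemma sqrt_cvar (p : Ω → ℝ) (hp0 : ∀ ω, 0 ≤ p ω) (U : Ω → 𝒰) (f : Ω → ℝ) :
    Real.sqrt (cvar p U f) = ‖cvec p U f‖ := by
  rw [← norm_cvec_sq p hp0 U f, Real.sqrt_sq (norm_nonneg _)]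

lemma abs_ccorr_le_one (p : Ω → ℝ) (hp0 : ∀ ω, 0 ≤ p ω) (U : Ω → 𝒰) (f g : Ω → ℝ) :
    |ccorr p U f g| ≤ 1 := by
  rw [ccorr]
  split
  · rename_i h
    rw [abs_div, ← inner_cvec p hp0, sqrt_cvar p hp0, sqrt_cvar p hp0]
    have hcs := abs_real_inner_le_norm (cvec p U f) (cvec p U g)
    have hd : 0 < ‖cvec p U f‖ * ‖cvec p U g‖ := by
      rcases mul_pos_iff.mp h with ⟨h1, h2⟩ | ⟨h1, h2⟩
      · have := sqrt_cvar p hp0 U f; have := sqrt_cvar p hp0 U g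
        have e1 : 0 < Real.sqrt (cvar p U f) := Real.sqrt_pos.mpr h1
        have e2 : 0 < Real.sqrt (cvar p U g) := Real.sqrt_pos.mpr h2
        rw [sqrt_cvar p hp0] at e1 e2; exact mul_pos e1 e2
      · exact absurd h2 (not_lt.mpr (cvar_nonneg p hp0 U g))
    rw [abs_of_pos hd, div_le_one hd]
    exact hcs
  · simp

lemma cexp_neg (p : Ω → ℝ) (U : Ω → 𝒰) (u : 𝒰) (g : Ω → ℝ) :
    cexp p U u (fun ω => -g ω) = -cexp p U u g := by
  rw [cexp, cexp, ← neg_div, ← Finset.sum_neg_distrib]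
  congr 1
  apply Finset.sum_congr rfl
  intro ω _; split <;> ring

lemma cvec_neg (p : Ω → ℝ) (U : Ω → 𝒰) (g : Ω → ℝ) :
    cvec p U (fun ω => -g ω) = -cvec p U g := by
  ext ω
  simp only [cvec, cexp_neg, PiLp.neg_apply, PiLp.toLp_apply]
  ring

lemma ccov_neg_right (p : Ω → ℝ) (hp0 : ∀ ω, 0 ≤ p ω) (U : Ω → 𝒰) (f g : Ω → ℝ) :
    ccov p U f (fun ω => -g ω) = -ccov p U f g := by
  rw [← inner_cvec p hp0, ← inner_cvec p hp0, cvec_neg, inner_neg_right]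

lemma cvar_neg (p : Ω → ℝ) (hp0 : ∀ ω, 0 ≤ p ω) (U : Ω → 𝒰) (g : Ω → ℝ) :
    cvar p U (fun ω => -g ω) = cvar p U g := by
  rw [← norm_cvec_sq p hp0, ← norm_cvec_sq p hp0, cvec_neg, norm_neg]

lemma ccorr_neg_right (p : Ω → ℝ) (hp0 : ∀ ω, 0 ≤ p ω) (U : Ω → 𝒰) (f g : Ω → ℝ) :
    ccorr p U f (fun ω => -g ω) = -ccorr p U f g := by
  rw [ccorr, ccorr, cvar_neg p hp0, ccov_neg_right p hp0]
  split <;> simp [neg_div]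

end Cvec
section Sup

variable {Ω : Type} [Fintype Ω] {𝒰 : Type} [Fintype 𝒰]

lemma bdd_inner {𝒴 : Type} (p : Ω → ℝ) (hp0 : ∀ ω, 0 ≤ p ω) (U : Ω → 𝒰) (F : Ω → ℝ)
    (Y : Ω → 𝒴) :
    BddAbove (Set.range fun g : 𝒴 × 𝒰 → ℝ => ccorr p U F fun ω => g (Y ω, U ω)) :=
  ⟨1, by rintro r ⟨g, rfl⟩; exact (abs_le.1 (abs_ccorr_le_one p hp0 U _ _)).2⟩

lemma iSup_inner_le_one {𝒴 : Type} (p : Ω → ℝ) (hp0 : ∀ ω, 0 ≤ p ω) (U : Ω → 𝒰)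
    (F : Ω → ℝ) (Y : Ω → 𝒴) :
    (⨆ g : 𝒴 × 𝒰 → ℝ, ccorr p U F fun ω => g (Y ω, U ω)) ≤ 1 :=
  ciSup_le fun g => (abs_le.1 (abs_ccorr_le_one p hp0 U _ _)).2

lemma bdd_outer {𝒳 𝒴 : Type} (p : Ω → ℝ) (hp0 : ∀ ω, 0 ≤ p ω) (U : Ω → 𝒰) (X : Ω → 𝒳)
    (Y : Ω → 𝒴) :
    BddAbove (Set.range fun f : 𝒳 × 𝒰 → ℝ =>
      ⨆ g : 𝒴 × 𝒰 → ℝ, ccorr p U (fun ω => f (X ω, U ω)) fun ω => g (Y ω, U ω)) :=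
  ⟨1, by rintro r ⟨f, rfl⟩; exact iSup_inner_le_one p hp0 U _ Y⟩

lemma maxCorr_le_one {𝒳 𝒴 : Type} (p : Ω → ℝ) (hp0 : ∀ ω, 0 ≤ p ω) (U : Ω → 𝒰)
    (X : Ω → 𝒳) (Y : Ω → 𝒴) : maxCorr p U X Y ≤ 1 :=
  ciSup_le fun f => iSup_inner_le_one p hp0 U _ Y

lemma ccorr_le_maxCorr {𝒳 𝒴 : Type} (p : Ω → ℝ) (hp0 : ∀ ω, 0 ≤ p ω) (U : Ω → 𝒰)
    (X : Ω → 𝒳) (Y : Ω → 𝒴) (f : 𝒳 × 𝒰 → ℝ) (g : 𝒴 × 𝒰 → ℝ) :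
    ccorr p U (fun ω => f (X ω, U ω)) (fun ω => g (Y ω, U ω)) ≤ maxCorr p U X Y := by
  refine le_trans (le_ciSup (bdd_inner p hp0 U _ Y) g) ?_
  exact le_ciSup (bdd_outer p hp0 U X Y) f

lemma cratio_le_maxCorr (p : Ω → ℝ) (hp0 : ∀ ω, 0 ≤ p ω) (U : Ω → 𝒰)
    (X : Ω → ℝ) {𝒴 : Type} (Y : Ω → 𝒴) : cratio p U X Y ≤ maxCorr p U X Y := by
  refine ciSup_le fun g => ?_
  exact ccorr_le_maxCorr p hp0 U X Y (fun q => q.1) g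

lemma abs_ccorr_le_cratio (p : Ω → ℝ) (hp0 : ∀ ω, 0 ≤ p ω) (U : Ω → 𝒰)
    (X Y : Ω → ℝ) : |ccorr p U X Y| ≤ cratio p U X Y := by
  rcases le_or_gt 0 (ccorr p U X Y) with h | h
  · rw [abs_of_nonneg h]
    exact le_ciSup (bdd_inner p hp0 U X Y) (fun q => q.1)
  · rw [abs_of_neg h]
    have : -ccorr p U X Y = ccorr p U X fun ω => (fun q : ℝ × 𝒰 => -q.1) (Y ω, U ω) := by
      rw [← ccorr_neg_right p hp0 U X Y]
    rw [this]
    exact le_ciSup (bdd_inner p hp0 U X Y) (fun q : ℝ × 𝒰 => -q.1)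

end Sup
section Formula

variable {Ω : Type} [Fintype Ω] {𝒰 : Type} [Fintype 𝒰]

/-- `∑_{U = u} p ω h ω`. -/
def fsum (p : Ω → ℝ) (U : Ω → 𝒰) (u : 𝒰) (h : Ω → ℝ) : ℝ :=
  ∑ ω, if U ω = u then p ω * h ω else 0

lemma cexp_eq_fsum (p : Ω → ℝ) (U : Ω → 𝒰) (u : 𝒰) (f : Ω → ℝ) :
    cexp p U u f = fsum p U u f / marg p U u := rfl

lemma fsum_congr (p : Ω → ℝ) (U : Ω → 𝒰) (u : 𝒰) {h₁ h₂ : Ω → ℝ}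
    (h : ∀ ω, U ω = u → h₁ ω = h₂ ω) : fsum p U u h₁ = fsum p U u h₂ := by
  refine Finset.sum_congr rfl fun ω _ => ?_
  by_cases hu : U ω = u
  · simp [hu, h ω hu]
  · simp [hu]

lemma fsum_eq_zero_of_marg (p : Ω → ℝ) (hp0 : ∀ ω, 0 ≤ p ω) (U : Ω → 𝒰) {u : 𝒰}
    (hm : marg p U u = 0) (h : Ω → ℝ) : fsum p U u h = 0 := by
  refine Finset.sum_eq_zero fun ω _ => ?_
  by_cases hu : U ω = u <;> simp [hu]
  left; exact p_eq_zero_of_marg p hp0 U hm hu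

lemma sum_fiber (U : Ω → 𝒰) (F : Ω → ℝ) :
    ∑ ω, F ω = ∑ u, ∑ ω, if U ω = u then F ω else 0 := by
  rw [Finset.sum_comm]
  refine Finset.sum_congr rfl fun ω _ => ?_
  simp [Finset.sum_ite_eq]

lemma ccov_formula (p : Ω → ℝ) (hp0 : ∀ ω, 0 ≤ p ω) (U : Ω → 𝒰) (f g : Ω → ℝ) :
    ccov p U f g = ∑ u, (fsum p U u (fun ω => f ω * g ω)
      - fsum p U u f * fsum p U u g / marg p U u) := by
  rw [ccov, expec, sum_fiber U]
  refine Finset.sum_congr rfl fun u _ => ?_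
  by_cases hm : marg p U u = 0
  · rw [fsum_eq_zero_of_marg p hp0 U hm, fsum_eq_zero_of_marg p hp0 U hm,
      fsum_eq_zero_of_marg p hp0 U hm]
    simp only [zero_mul, zero_div, sub_zero]
    refine Finset.sum_eq_zero fun ω _ => ?_
    by_cases hu : U ω = u <;> simp [hu]
    left; exact p_eq_zero_of_marg p hp0 U hm hu
  · have step1 : ∀ ω, (if U ω = u then p ω * ((f ω - cexp p U (U ω) f) * (g ω - cexp p U (U ω) g)) else 0)
        = (if U ω = u then p ω * (f ω * g ω) else 0)
          - (if U ω = u then p ω * f ω else 0) * cexp p U u g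
          - (if U ω = u then p ω * g ω else 0) * cexp p U u f
          + (if U ω = u then p ω else 0) * (cexp p U u f * cexp p U u g) := by
      intro ω
      by_cases hu : U ω = u
      · simp only [hu, if_pos rfl, if_true]; ring
      · simp [hu]
    rw [Finset.sum_congr rfl (fun ω _ => step1 ω)]
    have e1 : (∑ ω, if U ω = u then p ω * f ω else 0) = fsum p U u f := rfl
    have e2 : (∑ ω, if U ω = u then p ω * g ω else 0) = fsum p U u g := rfl
    have e3 : (∑ ω, if U ω = u then p ω * (f ω * g ω) else 0)
        = fsum p U u (fun ω => f ω * g ω) := rfl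
    rw [Finset.sum_add_distrib, Finset.sum_sub_distrib, Finset.sum_sub_distrib,
      ← Finset.sum_mul, ← Finset.sum_mul, ← Finset.sum_mul, e3, e1, e2, ← marg,
      cexp_eq_fsum, cexp_eq_fsum]
    field_simp
    ring

end Formula
section Indep

open scoped RealInnerProductSpace

variable {Ω : Type} [Fintype Ω] {𝒰 : Type} [Fintype 𝒰]

/-- conditional independence in marginal form -/
def Indep (p : Ω → ℝ) (X Y : Ω → ℝ) (U : Ω → 𝒰) : Prop :=
  ∀ (x y : ℝ) (u : 𝒰),
    marg p (fun ω => (X ω, Y ω, U ω)) (x, y, u) * marg p U u =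
      marg p (fun ω => (X ω, U ω)) (x, u) * marg p (fun ω => (Y ω, U ω)) (y, u)

lemma fsum_prod_eq (p : Ω → ℝ) (U : Ω → 𝒰) (X Y : Ω → ℝ) (u : 𝒰) (φ ψ : ℝ → ℝ) :
    fsum p U u (fun ω => φ (X ω) * ψ (Y ω)) =
      ∑ x ∈ Finset.univ.image X, ∑ y ∈ Finset.univ.image Y,
        marg p (fun ω => (X ω, Y ω, U ω)) (x, y, u) * (φ x * ψ y) := by
  rw [fsum]
  have key : ∀ ω, (if U ω = u then p ω * (φ (X ω) * ψ (Y ω)) else 0)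
      = ∑ x ∈ Finset.univ.image X, ∑ y ∈ Finset.univ.image Y,
          (if (X ω, Y ω, U ω) = (x, y, u) then p ω else 0) * (φ x * ψ y) := by
    intro ω
    rw [Finset.sum_eq_single (X ω)]
    · rw [Finset.sum_eq_single (Y ω)]
      · by_cases hu : U ω = u <;> simp [hu]
      · intro y _ hy
        have : ¬((X ω, Y ω, U ω) = (X ω, y, u)) := by
          simp only [Prod.mk.injEq]; rintro ⟨-, h2, -⟩; exact hy h2.symm
        simp [this]
      · intro hx; exact absurd (Finset.mem_image_of_mem Y (Finset.mem_univ ω)) hx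
    · intro x _ hx
      refine Finset.sum_eq_zero fun y _ => ?_
      have : ¬((X ω, Y ω, U ω) = (x, y, u)) := by
        simp only [Prod.mk.injEq]; rintro ⟨h1, -⟩; exact hx h1.symm
      simp [this]
    · intro hx; exact absurd (Finset.mem_image_of_mem X (Finset.mem_univ ω)) hx
  rw [Finset.sum_congr rfl fun ω _ => key ω]
  rw [Finset.sum_comm]
  refine Finset.sum_congr rfl fun x _ => ?_
  rw [Finset.sum_comm]
  refine Finset.sum_congr rfl fun y _ => ?_
  rw [marg, Finset.sum_mul]
  refine Finset.sum_congr rfl fun ω _ => ?_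
  split <;> simp

lemma fsum_single_eq (p : Ω → ℝ) (U : Ω → 𝒰) (X : Ω → ℝ) (u : 𝒰) (φ : ℝ → ℝ) :
    fsum p U u (fun ω => φ (X ω)) =
      ∑ x ∈ Finset.univ.image X, marg p (fun ω => (X ω, U ω)) (x, u) * φ x := by
  rw [fsum]
  have key : ∀ ω, (if U ω = u then p ω * φ (X ω) else 0)
      = ∑ x ∈ Finset.univ.image X, (if (X ω, U ω) = (x, u) then p ω else 0) * φ x := by
    intro ω
    rw [Finset.sum_eq_single (X ω)]
    · by_cases hu : U ω = u <;> simp [hu]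
    · intro x _ hx
      have : ¬((X ω, U ω) = (x, u)) := by
        simp only [Prod.mk.injEq]; rintro ⟨h1, -⟩; exact hx h1.symm
      simp [this]
    · intro hx; exact absurd (Finset.mem_image_of_mem X (Finset.mem_univ ω)) hx
  rw [Finset.sum_congr rfl fun ω _ => key ω, Finset.sum_comm]
  refine Finset.sum_congr rfl fun x _ => ?_
  rw [marg, Finset.sum_mul]
  refine Finset.sum_congr rfl fun ω _ => ?_
  congr 1
  split <;> rfl

lemma indep_fsum_mul (p : Ω → ℝ) (X Y : Ω → ℝ) (U : Ω → 𝒰) (h : Indep p X Y U)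
    (u : 𝒰) (φ ψ : ℝ → ℝ) :
    marg p U u * fsum p U u (fun ω => φ (X ω) * ψ (Y ω)) =
      fsum p U u (fun ω => φ (X ω)) * fsum p U u (fun ω => ψ (Y ω)) := by
  rw [fsum_prod_eq, fsum_single_eq, fsum_single_eq, Finset.sum_mul_sum, Finset.mul_sum]
  refine Finset.sum_congr rfl fun x _ => ?_
  rw [Finset.mul_sum]
  refine Finset.sum_congr rfl fun y _ => ?_
  linear_combination (φ x * ψ y) * (h x y u)

lemma indep_ccov (p : Ω → ℝ) (hp0 : ∀ ω, 0 ≤ p ω) (X Y : Ω → ℝ) (U : Ω → 𝒰)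
    (h : Indep p X Y U) (f g : ℝ × 𝒰 → ℝ) :
    ccov p U (fun ω => f (X ω, U ω)) (fun ω => g (Y ω, U ω)) = 0 := by
  rw [ccov_formula p hp0]
  refine Finset.sum_eq_zero fun u _ => ?_
  have e1 : fsum p U u (fun ω => f (X ω, U ω) * g (Y ω, U ω))
      = fsum p U u (fun ω => f (X ω, u) * g (Y ω, u)) :=
    fsum_congr p U u fun ω hu => by rw [hu]
  have e2 : fsum p U u (fun ω => f (X ω, U ω)) = fsum p U u (fun ω => f (X ω, u)) :=
    fsum_congr p U u fun ω hu => by rw [hu]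
  have e3 : fsum p U u (fun ω => g (Y ω, U ω)) = fsum p U u (fun ω => g (Y ω, u)) :=
    fsum_congr p U u fun ω hu => by rw [hu]
  rw [e1, e2, e3]
  by_cases hm : marg p U u = 0
  · rw [fsum_eq_zero_of_marg p hp0 U hm, fsum_eq_zero_of_marg p hp0 U hm,
      fsum_eq_zero_of_marg p hp0 U hm]
    simp
  · have key := indep_fsum_mul p X Y U h u (fun x => f (x, u)) (fun y => g (y, u))
    field_simp
    linarith [key]

lemma ccorr_eq_zero_of_ccov (p : Ω → ℝ) (U : Ω → 𝒰) (f g : Ω → ℝ)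
    (h : ccov p U f g = 0) : ccorr p U f g = 0 := by
  rw [ccorr, h]; split <;> simp

lemma maxCorr_eq_zero_of_indep (p : Ω → ℝ) (hp0 : ∀ ω, 0 ≤ p ω) (X Y : Ω → ℝ)
    (U : Ω → 𝒰) (h : Indep p X Y U) : maxCorr p U X Y = 0 := by
  rw [maxCorr]
  have : ∀ f : ℝ × 𝒰 → ℝ, (⨆ g : ℝ × 𝒰 → ℝ,
      ccorr p U (fun ω => f (X ω, U ω)) fun ω => g (Y ω, U ω)) = 0 := by
    intro f
    have : ∀ g : ℝ × 𝒰 → ℝ,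
        ccorr p U (fun ω => f (X ω, U ω)) (fun ω => g (Y ω, U ω)) = 0 :=
      fun g => ccorr_eq_zero_of_ccov p U _ _ (indep_ccov p hp0 X Y U h f g)
    rw [funext this]
    exact ciSup_const
  rw [funext this]
  exact ciSup_const

end Indep
section Indep2

open scoped RealInnerProductSpace

variable {Ω : Type} [Fintype Ω] {𝒰 : Type} [Fintype 𝒰]

lemma marg_pair_le {α : Type} (p : Ω → ℝ) (hp0 : ∀ ω, 0 ≤ p ω) (U : Ω → 𝒰)
    (V : Ω → α) (v : α) (u : 𝒰) :
    marg p (fun ω => (V ω, U ω)) (v, u) ≤ marg p U u := by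
  refine Finset.sum_le_sum fun ω _ => ?_
  by_cases h1 : (V ω, U ω) = (v, u)
  · rw [if_pos h1, if_pos (by rw [Prod.mk.injEq] at h1; exact h1.2)]
  · rw [if_neg h1]; split <;> simp [hp0 ω]

lemma cvec_eq_zero_of_cvar (p : Ω → ℝ) (hp0 : ∀ ω, 0 ≤ p ω) (U : Ω → 𝒰) (f : Ω → ℝ)
    (h : cvar p U f = 0) : cvec p U f = 0 := by
  have := norm_cvec_sq p hp0 U f
  rw [h, pow_eq_zero_iff (by norm_num)] at this
  exact norm_eq_zero.mp this

lemma ccov_eq_zero_of_maxCorr_zero (p : Ω → ℝ) (hp0 : ∀ ω, 0 ≤ p ω)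
    (X Y : Ω → ℝ) (U : Ω → 𝒰) (h : maxCorr p U X Y = 0) (f g : ℝ × 𝒰 → ℝ) :
    ccov p U (fun ω => f (X ω, U ω)) (fun ω => g (Y ω, U ω)) = 0 := by
  have h1 : ccorr p U (fun ω => f (X ω, U ω)) (fun ω => g (Y ω, U ω)) ≤ 0 := by
    rw [← h]; exact ccorr_le_maxCorr p hp0 U X Y f g
  have h2 : -(ccorr p U (fun ω => f (X ω, U ω)) fun ω => g (Y ω, U ω)) ≤ 0 := by
    rw [← ccorr_neg_right p hp0, ← h]
    exact ccorr_le_maxCorr p hp0 U X Y f (fun q => -g q)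
  have hc0 : ccorr p U (fun ω => f (X ω, U ω)) (fun ω => g (Y ω, U ω)) = 0 :=
    le_antisymm h1 (by linarith)
  rw [ccorr] at hc0
  by_cases hg : 0 < cvar p U (fun ω => f (X ω, U ω)) * cvar p U (fun ω => g (Y ω, U ω))
  · rw [if_pos hg] at hc0
    have hd : Real.sqrt (cvar p U fun ω => f (X ω, U ω)) *
        Real.sqrt (cvar p U fun ω => g (Y ω, U ω)) ≠ 0 := by
      rcases mul_pos_iff.mp hg with ⟨ha, hb⟩ | ⟨ha, hb⟩
      · positivity
      · exact absurd hb (not_lt.mpr (cvar_nonneg p hp0 U _))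
    exact (div_eq_zero_iff.mp hc0).resolve_right hd
  · have hprod : cvar p U (fun ω => f (X ω, U ω)) * cvar p U (fun ω => g (Y ω, U ω)) = 0 :=
      le_antisymm (not_lt.mp hg) (mul_nonneg (cvar_nonneg p hp0 U _) (cvar_nonneg p hp0 U _))
    rw [← inner_cvec p hp0]
    rcases mul_eq_zero.mp hprod with hz | hz
    · rw [cvec_eq_zero_of_cvar p hp0 U _ hz, inner_zero_left]
    · rw [cvec_eq_zero_of_cvar p hp0 U _ hz, inner_zero_right]

lemma indep_of_maxCorr_zero (p : Ω → ℝ) (hp0 : ∀ ω, 0 ≤ p ω)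
    (X Y : Ω → ℝ) (U : Ω → 𝒰) (h : maxCorr p U X Y = 0) : Indep p X Y U := by
  intro x y u
  set f : ℝ × 𝒰 → ℝ := fun q => if q.1 = x ∧ q.2 = u then 1 else 0 with hf
  set g : ℝ × 𝒰 → ℝ := fun q => if q.1 = y ∧ q.2 = u then 1 else 0 with hg
  have hcc := ccov_eq_zero_of_maxCorr_zero p hp0 X Y U h f g
  rw [ccov_formula p hp0] at hcc
  have hzero : ∀ u' ∈ Finset.univ, u' ≠ u →
      (fsum p U u' (fun ω => f (X ω, U ω) * g (Y ω, U ω))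
        - fsum p U u' (fun ω => f (X ω, U ω)) * fsum p U u' (fun ω => g (Y ω, U ω))
          / marg p U u') = 0 := by
    intro u' _ hne
    have z1 : fsum p U u' (fun ω => f (X ω, U ω) * g (Y ω, U ω)) = 0 := by
      refine Finset.sum_eq_zero fun ω _ => ?_
      by_cases hω : U ω = u' <;> simp [hf, hg, hω, hne]
    have z2 : fsum p U u' (fun ω => f (X ω, U ω)) = 0 := by
      refine Finset.sum_eq_zero fun ω _ => ?_
      by_cases hω : U ω = u' <;> simp [hf, hω, hne]
    have z3 : fsum p U u' (fun ω => g (Y ω, U ω)) = 0 := by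
      refine Finset.sum_eq_zero fun ω _ => ?_
      by_cases hω : U ω = u' <;> simp [hg, hω, hne]
    rw [z1, z2, z3]; simp
  rw [Finset.sum_eq_single_of_mem u (Finset.mem_univ u) hzero] at hcc
  have A : fsum p U u (fun ω => f (X ω, U ω) * g (Y ω, U ω))
      = marg p (fun ω => (X ω, Y ω, U ω)) (x, y, u) := by
    refine Finset.sum_congr rfl fun ω _ => ?_
    by_cases h1 : U ω = u <;> by_cases h2 : X ω = x <;> by_cases h3 : Y ω = y <;>
      simp [hf, hg, h1, h2, h3, Prod.ext_iff]
  have B : fsum p U u (fun ω => f (X ω, U ω)) = marg p (fun ω => (X ω, U ω)) (x, u) := by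
    refine Finset.sum_congr rfl fun ω _ => ?_
    by_cases h1 : U ω = u <;> by_cases h2 : X ω = x <;> simp [hf, h1, h2, Prod.ext_iff]
  have C : fsum p U u (fun ω => g (Y ω, U ω)) = marg p (fun ω => (Y ω, U ω)) (y, u) := by
    refine Finset.sum_congr rfl fun ω _ => ?_
    by_cases h1 : U ω = u <;> by_cases h2 : Y ω = y <;> simp [hg, h1, h2, Prod.ext_iff]
  rw [A, B, C] at hcc
  by_cases hm : marg p U u = 0
  · rw [hm, mul_zero]
    have hx0 : marg p (fun ω => (X ω, U ω)) (x, u) = 0 :=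
      le_antisymm (hm ▸ marg_pair_le p hp0 U X x u) (marg_nonneg p hp0 _ _)
    rw [hx0, zero_mul]
  · field_simp at hcc
    linarith [hcc]

end Indep2
section Entropy

variable {Ω : Type} [Fintype Ω] {𝒰 : Type} [Fintype 𝒰] {𝒱 : Type} [Fintype 𝒱]

lemma marg_fiber_sum (p : Ω → ℝ) (U : Ω → 𝒰) (V : Ω → 𝒱) (u : 𝒰) :
    marg p U u = ∑ v, marg p (fun ω => (V ω, U ω)) (v, u) := by
  unfold marg
  rw [Finset.sum_comm]
  refine Finset.sum_congr rfl fun ω _ => ?_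
  refine Eq.symm ((Finset.sum_eq_single_of_mem (V ω) (Finset.mem_univ _) ?_).trans ?_)
  · intro v _ hv
    apply if_neg
    simp only [Prod.mk.injEq, not_and]
    intro h1
    exact fun _ => hv h1.symm
  · by_cases h2 : U ω = u <;> simp [h2]

lemma condEnt_eq_sum (p : Ω → ℝ) (U : Ω → 𝒰) (V : Ω → 𝒱) :
    condEnt p V U = ∑ x : 𝒱 × 𝒰, marg p (fun ω => (V ω, U ω)) x *
      (Real.logb 2 (marg p U x.2) - Real.logb 2 (marg p (fun ω => (V ω, U ω)) x)) := by
  have e1 : ∀ u, -(marg p U u * Real.logb 2 (marg p U u))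
      = ∑ v, -(marg p (fun ω => (V ω, U ω)) (v, u) * Real.logb 2 (marg p U u)) := by
    intro u
    rw [Finset.sum_neg_distrib, ← Finset.sum_mul, ← marg_fiber_sum p U V u]
  rw [condEnt, ent, ent,
    Fintype.sum_prod_type_right (f := fun x : 𝒱 × 𝒰 =>
      -(marg p (fun ω => (V ω, U ω)) x * Real.logb 2 (marg p (fun ω => (V ω, U ω)) x))),
    Fintype.sum_prod_type_right (f := fun x : 𝒱 × 𝒰 =>
      marg p (fun ω => (V ω, U ω)) x *
        (Real.logb 2 (marg p U x.2) - Real.logb 2 (marg p (fun ω => (V ω, U ω)) x))),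
    ← Finset.sum_sub_distrib]
  refine Finset.sum_congr rfl fun u _ => ?_
  rw [e1 u, ← Finset.sum_sub_distrib]
  refine Finset.sum_congr rfl fun v _ => ?_
  ring

lemma condEnt_term_nonneg (p : Ω → ℝ) (hp0 : ∀ ω, 0 ≤ p ω) (U : Ω → 𝒰) (V : Ω → 𝒱)
    (x : 𝒱 × 𝒰) :
    0 ≤ marg p (fun ω => (V ω, U ω)) x *
      (Real.logb 2 (marg p U x.2) - Real.logb 2 (marg p (fun ω => (V ω, U ω)) x)) := by
  rcases eq_or_lt_of_le (marg_nonneg p hp0 (fun ω => (V ω, U ω)) x) with h | h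
  · rw [← h, zero_mul]
  · obtain ⟨v, u⟩ := x
    have hle : marg p (fun ω => (V ω, U ω)) (v, u) ≤ marg p U u := marg_pair_le p hp0 U V v u
    have : Real.logb 2 (marg p (fun ω => (V ω, U ω)) (v, u)) ≤ Real.logb 2 (marg p U u) :=
      Real.logb_le_logb_of_le one_lt_two h hle
    have := sub_nonneg.mpr this
    positivity

lemma condEnt_nonneg (p : Ω → ℝ) (hp0 : ∀ ω, 0 ≤ p ω) (U : Ω → 𝒰) (V : Ω → 𝒱) :
    0 ≤ condEnt p V U := by
  rw [condEnt_eq_sum]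
  exact Finset.sum_nonneg fun x _ => condEnt_term_nonneg p hp0 U V x

/-- If `V` is a.s. determined by `U`, conditional entropy vanishes. -/
lemma condEnt_eq_zero_of_det (p : Ω → ℝ) (hp0 : ∀ ω, 0 ≤ p ω) (U : Ω → 𝒰) (V : Ω → 𝒱)
    (hdet : ∀ ω₁ ω₂, 0 < p ω₁ → 0 < p ω₂ → U ω₁ = U ω₂ → V ω₁ = V ω₂) :
    condEnt p V U = 0 := by
  rw [condEnt_eq_sum]
  refine Finset.sum_eq_zero fun x _ => ?_
  obtain ⟨v, u⟩ := x
  rcases eq_or_lt_of_le (marg_nonneg p hp0 (fun ω => (V ω, U ω)) (v, u)) with h | h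
  · rw [← h, zero_mul]
  · -- some ω₁ with p ω₁ > 0, V ω₁ = v, U ω₁ = u
    have hex : ∃ ω₁, 0 < p ω₁ ∧ V ω₁ = v ∧ U ω₁ = u := by
      by_contra hcon
      push_neg at hcon
      have : marg p (fun ω => (V ω, U ω)) (v, u) = 0 := by
        refine Finset.sum_eq_zero fun ω _ => ?_
        by_cases hω : (V ω, U ω) = (v, u)
        · rw [if_pos hω]
          rw [Prod.mk.injEq] at hω
          rcases eq_or_lt_of_le (hp0 ω) with hp | hp
          · exact hp.symm
          · exact absurd hω.2 ((hcon ω hp hω.1))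
        · rw [if_neg hω]
      linarith
    obtain ⟨ω₁, hp1, hv1, hu1⟩ := hex
    have heq : marg p (fun ω => (V ω, U ω)) (v, u) = marg p U u := by
      unfold marg
      refine Finset.sum_congr rfl fun ω _ => ?_
      by_cases hu : U ω = u
      · rw [if_pos hu]
        rcases eq_or_lt_of_le (hp0 ω) with hp | hp
        · split
          · rfl
          · exact hp
        · have hvv : V ω = v := by rw [hdet ω ω₁ hp hp1 (hu.trans hu1.symm), hv1]
          have hc : (fun ω' => (V ω', U ω')) ω = (v, u) := by
            show (V ω, U ω) = (v, u); rw [hvv, hu]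
          rw [if_pos hc]
      · rw [if_neg hu, if_neg (by simp [Prod.ext_iff, hu])]
    rw [heq, sub_self, mul_zero]

/-- If `V` is genuinely random given `U`, conditional entropy is positive. -/
lemma condEnt_pos_of_nondet (p : Ω → ℝ) (hp0 : ∀ ω, 0 ≤ p ω) (U : Ω → 𝒰) (V : Ω → 𝒱)
    (ω₁ ω₂ : Ω) (hp1 : 0 < p ω₁) (hp2 : 0 < p ω₂) (hU : U ω₁ = U ω₂)
    (hV : V ω₁ ≠ V ω₂) : 0 < condEnt p V U := by
  rw [condEnt_eq_sum]
  have hx := Finset.mem_univ ((V ω₁, U ω₁) : 𝒱 × 𝒰)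
  refine Finset.sum_pos' (fun x _ => condEnt_term_nonneg p hp0 U V x) ⟨(V ω₁, U ω₁), hx, ?_⟩
  have hPpos : 0 < marg p (fun ω => (V ω, U ω)) (V ω₁, U ω₁) :=
    marg_pos p hp0 (fun ω => (V ω, U ω)) ω₁ hp1
  have hlt : marg p (fun ω => (V ω, U ω)) (V ω₁, U ω₁) < marg p U (U ω₁) := by
    unfold marg
    beta_reduce
    refine Finset.sum_lt_sum (fun ω _ => ?_) ⟨ω₂, Finset.mem_univ ω₂, ?_⟩
    · by_cases h1 : (V ω, U ω) = (V ω₁, U ω₁)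
      · rw [if_pos h1, if_pos (by rw [Prod.mk.injEq] at h1; exact h1.2)]
      · rw [if_neg h1]; split <;> simp [hp0 ω]
    · rw [if_neg (by simp only [Prod.mk.injEq, not_and]; intro hv; exact fun _ => hV hv.symm),
        if_pos hU.symm]
      exact hp2
  have hlog : Real.logb 2 (marg p (fun ω => (V ω, U ω)) (V ω₁, U ω₁))
      < Real.logb 2 (marg p U (U ω₁)) := Real.logb_lt_logb one_lt_two hPpos hlt
  have := sub_pos.mpr hlog
  positivity

end Entropy
section CommonInfo

open scoped RealInnerProductSpace

variable {Ω : Type} [Fintype Ω] {𝒰 : Type} [Fintype 𝒰]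

lemma cexp_congr_ae (p : Ω → ℝ) (hp0 : ∀ ω, 0 ≤ p ω) (U : Ω → 𝒰) {F G : Ω → ℝ}
    (h : ∀ ω, 0 < p ω → F ω = G ω) (u : 𝒰) : cexp p U u F = cexp p U u G := by
  rw [cexp, cexp]
  congr 1
  refine Finset.sum_congr rfl fun ω _ => ?_
  rcases eq_or_lt_of_le (hp0 ω) with hp | hp
  · rw [← hp]; simp
  · rw [h ω hp]

lemma ccov_ae_self (p : Ω → ℝ) (hp0 : ∀ ω, 0 ≤ p ω) (U : Ω → 𝒰) {F G : Ω → ℝ}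
    (h : ∀ ω, 0 < p ω → F ω = G ω) : ccov p U F G = cvar p U F := by
  rw [cvar, ccov, ccov, expec, expec]
  refine Finset.sum_congr rfl fun ω _ => ?_
  rcases eq_or_lt_of_le (hp0 ω) with hp | hp
  · rw [← hp]; simp
  · rw [cexp_congr_ae p hp0 U h, h ω hp]

lemma cvar_ae_eq (p : Ω → ℝ) (hp0 : ∀ ω, 0 ≤ p ω) (U : Ω → 𝒰) {F G : Ω → ℝ}
    (h : ∀ ω, 0 < p ω → F ω = G ω) : cvar p U G = cvar p U F := by
  rw [cvar, cvar, ccov, ccov, expec, expec]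
  refine Finset.sum_congr rfl fun ω _ => ?_
  rcases eq_or_lt_of_le (hp0 ω) with hp | hp
  · rw [← hp]; simp
  · rw [cexp_congr_ae p hp0 U h, h ω hp]

lemma ccorr_ae_one (p : Ω → ℝ) (hp0 : ∀ ω, 0 ≤ p ω) (U : Ω → 𝒰) {F G : Ω → ℝ}
    (h : ∀ ω, 0 < p ω → F ω = G ω) (hv : 0 < cvar p U F) : ccorr p U F G = 1 := by
  rw [ccorr, ccov_ae_self p hp0 U h, cvar_ae_eq p hp0 U h,
    if_pos (mul_pos hv hv), Real.mul_self_sqrt (le_of_lt hv), div_self (ne_of_gt hv)]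

lemma det_of_cvar_zero (p : Ω → ℝ) (hp0 : ∀ ω, 0 ≤ p ω) (U : Ω → 𝒰) {F : Ω → ℝ}
    (h : cvar p U F = 0) : ∀ ω, 0 < p ω → F ω = cexp p U (U ω) F := by
  intro ω hp
  rw [cvar, ccov, expec] at h
  have hterm := (Finset.sum_eq_zero_iff_of_nonneg (fun ω' _ => mul_nonneg (hp0 ω') (mul_self_nonneg _))).mp h ω
    (Finset.mem_univ ω)
  have h2 : (F ω - cexp p U (U ω) F) * (F ω - cexp p U (U ω) F) = 0 := by
    rcases mul_eq_zero.mp hterm with hz | hz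
    · exact absurd hz (ne_of_gt hp)
    · exact hz
  have := mul_self_eq_zero.mp h2
  linarith

lemma maxCorr_eq_one_of_common (p : Ω → ℝ) (hp0 : ∀ ω, 0 ≤ p ω) (X Y : Ω → ℝ)
    (U : Ω → 𝒰) (𝒱 : FinAlph) (f g : ℝ × 𝒰 → 𝒱)
    (hae : AEEq p (fun ω => f (X ω, U ω)) (fun ω => g (Y ω, U ω)))
    (hent : 0 < condEnt p (fun ω => f (X ω, U ω)) U) : maxCorr p U X Y = 1 := by
  set e : 𝒱 → ℝ := fun v => ((Fintype.equivFin 𝒱 v : ℕ) : ℝ) with he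
  have einj : Function.Injective e := by
    intro a b hab
    exact (Fintype.equivFin 𝒱).injective (Fin.val_injective (Nat.cast_injective hab))
  set F : Ω → ℝ := fun ω => e (f (X ω, U ω)) with hF
  set G : Ω → ℝ := fun ω => e (g (Y ω, U ω)) with hG
  have hFG : ∀ ω, 0 < p ω → F ω = G ω := fun ω hp => congrArg e (hae ω hp)
  have hcv : 0 < cvar p U F := by
    rcases eq_or_lt_of_le (cvar_nonneg p hp0 U F) with h0 | h0
    · exfalso
      have hdet := det_of_cvar_zero p hp0 U h0.symm
      have : condEnt p (fun ω => f (X ω, U ω)) U = 0 := by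
        refine condEnt_eq_zero_of_det p hp0 U _ fun ω₁ ω₂ hp1 hp2 hU => ?_
        apply einj
        show F ω₁ = F ω₂
        rw [hdet ω₁ hp1, hdet ω₂ hp2, hU]
      rw [this] at hent
      exact lt_irrefl 0 hent
    · exact h0
  have hone : ccorr p U F G = 1 := ccorr_ae_one p hp0 U hFG hcv
  refine le_antisymm (maxCorr_le_one p hp0 U X Y) ?_
  rw [← hone]
  exact ccorr_le_maxCorr p hp0 U X Y (fun q => e (f q)) (fun q => e (g q))

end CommonInfo
section Linear

variable {Ω : Type} [Fintype Ω] {𝒰 : Type} [Fintype 𝒰]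

lemma cexp_add (p : Ω → ℝ) (U : Ω → 𝒰) (u : 𝒰) (f g : Ω → ℝ) :
    cexp p U u (f + g) = cexp p U u f + cexp p U u g := by
  rw [cexp, cexp, cexp, ← add_div]
  congr 1
  rw [← Finset.sum_add_distrib]
  refine Finset.sum_congr rfl fun ω _ => ?_
  by_cases hu : U ω = u <;> simp [hu] <;> ring

lemma cexp_smul (p : Ω → ℝ) (U : Ω → 𝒰) (u : 𝒰) (c : ℝ) (f : Ω → ℝ) :
    cexp p U u (c • f) = c * cexp p U u f := by
  rw [cexp, cexp, ← mul_div_assoc, Finset.mul_sum]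
  congr 1
  refine Finset.sum_congr rfl fun ω _ => ?_
  by_cases hu : U ω = u <;> simp [hu] <;> ring

/-- `cvec` as a linear map. -/
def cvecL (p : Ω → ℝ) (U : Ω → 𝒰) : (Ω → ℝ) →ₗ[ℝ] EuclideanSpace ℝ Ω where
  toFun := cvec p U
  map_add' := by
    intro f g
    ext ω
    show Real.sqrt (p ω) * ((f + g) ω - cexp p U (U ω) (f + g))
      = cvec p U f ω + cvec p U g ω
    rw [cexp_add, Pi.add_apply, cvec, cvec]
    simp only [WithLp.ofLp_toLp]
    ring
  map_smul' := by
    intro c f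
    ext ω
    show Real.sqrt (p ω) * ((c • f) ω - cexp p U (U ω) (c • f))
      = (c • cvec p U f) ω
    rw [cexp_smul, Pi.smul_apply, PiLp.smul_apply, cvec, smul_eq_mul, smul_eq_mul]
    simp only [WithLp.ofLp_toLp]
    ring

lemma cvecL_apply (p : Ω → ℝ) (U : Ω → 𝒰) (f : Ω → ℝ) : cvecL p U f = cvec p U f := rfl

/-- Functions factoring through `Z`. -/
def factSet {α : Type} (Z : Ω → α) : Submodule ℝ (Ω → ℝ) where
  carrier := {F | ∃ f : α → ℝ, ∀ ω, F ω = f (Z ω)}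
  add_mem' := by
    rintro F G ⟨f, hf⟩ ⟨g, hg⟩
    exact ⟨f + g, fun ω => by simp [hf ω, hg ω]⟩
  zero_mem' := ⟨0, fun ω => rfl⟩
  smul_mem' := by
    rintro c F ⟨f, hf⟩
    exact ⟨c • f, fun ω => by simp [hf ω]⟩

end Linear
section Attain

open scoped RealInnerProductSpace

variable {Ω : Type} [Fintype Ω] {𝒰 : Type} [Fintype 𝒰]

lemma common_of_maxCorr_one (p : Ω → ℝ) (hp0 : ∀ ω, 0 ≤ p ω) (X Y : Ω → ℝ) (U : Ω → 𝒰)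
    (h : maxCorr p U X Y = 1) :
    ∃ (𝒱 : FinAlph) (f g : ℝ × 𝒰 → 𝒱),
      AEEq p (fun ω => f (X ω, U ω)) (fun ω => g (Y ω, U ω)) ∧
      0 < condEnt p (fun ω => f (X ω, U ω)) U := by
  classical
  set E := EuclideanSpace ℝ Ω
  set SX : Submodule ℝ E := Submodule.map (cvecL p U) (factSet fun ω => (X ω, U ω)) with hSX
  set SY : Submodule ℝ E := Submodule.map (cvecL p U) (factSet fun ω => (Y ω, U ω)) with hSY
  set KX : Set E := (Metric.sphere 0 1 : Set E) ∩ SX with hKX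
  set KY : Set E := (Metric.sphere 0 1 : Set E) ∩ SY with hKY
  have hKXc : IsCompact KX :=
    IsCompact.of_isClosed_subset (isCompact_closedBall (0 : E) 1)
      (Metric.isClosed_sphere.inter (Submodule.closed_of_finiteDimensional SX))
      (fun x hx => Metric.sphere_subset_closedBall hx.1)
  have hKYc : IsCompact KY :=
    IsCompact.of_isClosed_subset (isCompact_closedBall (0 : E) 1)
      (Metric.isClosed_sphere.inter (Submodule.closed_of_finiteDimensional SY))
      (fun x hx => Metric.sphere_subset_closedBall hx.1)
  -- a positively correlated pair exists
  have hex : ∃ (f g : ℝ × 𝒰 → ℝ),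
      0 < ccorr p U (fun ω => f (X ω, U ω)) (fun ω => g (Y ω, U ω)) := by
    by_contra hc
    push_neg at hc
    have : maxCorr p U X Y ≤ 0 :=
      ciSup_le fun f => ciSup_le fun g => hc f g
    rw [h] at this
    linarith
  obtain ⟨f0, g0, hpos⟩ := hex
  rw [ccorr] at hpos
  by_cases hguard : 0 < cvar p U (fun ω => f0 (X ω, U ω)) * cvar p U (fun ω => g0 (Y ω, U ω))
  swap
  · rw [if_neg hguard] at hpos; linarith
  have hcvF0 : 0 < cvar p U (fun ω => f0 (X ω, U ω)) := by
    rcases mul_pos_iff.mp hguard with ⟨h1, _⟩ | ⟨_, h2⟩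
    · exact h1
    · exact absurd h2 (not_lt.mpr (cvar_nonneg p hp0 U _))
  have hcvG0 : 0 < cvar p U (fun ω => g0 (Y ω, U ω)) := by
    rcases mul_pos_iff.mp hguard with ⟨_, h1⟩ | ⟨h2, _⟩
    · exact h1
    · exact absurd h2 (not_lt.mpr (cvar_nonneg p hp0 U _))
  -- normalized members
  have hmemX : ∀ f : ℝ × 𝒰 → ℝ, cvec p U (fun ω => f (X ω, U ω)) ∈ SX := by
    intro f
    exact Submodule.mem_map_of_mem ⟨fun q => f q, fun ω => rfl⟩
  have hmemY : ∀ g : ℝ × 𝒰 → ℝ, cvec p U (fun ω => g (Y ω, U ω)) ∈ SY := by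
    intro g
    exact Submodule.mem_map_of_mem ⟨fun q => g q, fun ω => rfl⟩
  have hnormalize : ∀ (F : Ω → ℝ), 0 < cvar p U F →
      ‖(‖cvec p U F‖⁻¹ • cvec p U F : E)‖ = 1 := by
    intro F hF
    have hnz : ‖cvec p U F‖ ≠ 0 := by
      intro hz
      rw [← norm_cvec_sq p hp0 U F, hz] at hF
      norm_num at hF
    rw [norm_smul, norm_inv, norm_norm, inv_mul_cancel₀ hnz]
  set a0 : E := ‖cvec p U (fun ω => f0 (X ω, U ω))‖⁻¹ • cvec p U (fun ω => f0 (X ω, U ω))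
  set b0 : E := ‖cvec p U (fun ω => g0 (Y ω, U ω))‖⁻¹ • cvec p U (fun ω => g0 (Y ω, U ω))
  have ha0 : a0 ∈ KX :=
    ⟨mem_sphere_zero_iff_norm.mpr (hnormalize _ hcvF0), Submodule.smul_mem _ _ (hmemX f0)⟩
  have hb0 : b0 ∈ KY :=
    ⟨mem_sphere_zero_iff_norm.mpr (hnormalize _ hcvG0), Submodule.smul_mem _ _ (hmemY g0)⟩
  -- maximize inner product over the compact product
  obtain ⟨q0, hq0K, hq0max⟩ := (hKXc.prod hKYc).exists_isMaxOn
    ⟨(a0, b0), Set.mk_mem_prod ha0 hb0⟩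
    (continuous_inner.continuousOn : ContinuousOn (fun q : E × E => ⟪q.1, q.2⟫) _)
  set M : ℝ := ⟪q0.1, q0.2⟫ with hM
  have hq1n : ‖q0.1‖ = 1 := mem_sphere_zero_iff_norm.mp hq0K.1.1
  have hq2n : ‖q0.2‖ = 1 := mem_sphere_zero_iff_norm.mp hq0K.2.1
  have hM0 : 0 ≤ M := by
    have hmem : ((q0.1, -q0.2) : E × E) ∈ KX ×ˢ KY := by
      refine Set.mk_mem_prod hq0K.1 ⟨?_, Submodule.neg_mem _ hq0K.2.2⟩
      rw [mem_sphere_zero_iff_norm, norm_neg, hq2n]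
    have := hq0max hmem
    simp only [Set.mem_setOf_eq, inner_neg_right] at this
    linarith
  -- every correlation value is at most M
  have hle : ∀ (f g : ℝ × 𝒰 → ℝ),
      ccorr p U (fun ω => f (X ω, U ω)) (fun ω => g (Y ω, U ω)) ≤ M := by
    intro f g
    rw [ccorr]
    split
    · rename_i hg2
      have hcf : 0 < cvar p U (fun ω => f (X ω, U ω)) := by
        rcases mul_pos_iff.mp hg2 with ⟨h1, _⟩ | ⟨_, h2⟩
        · exact h1
        · exact absurd h2 (not_lt.mpr (cvar_nonneg p hp0 U _))
      have hcg : 0 < cvar p U (fun ω => g (Y ω, U ω)) := by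
        rcases mul_pos_iff.mp hg2 with ⟨_, h1⟩ | ⟨h2, _⟩
        · exact h1
        · exact absurd h2 (not_lt.mpr (cvar_nonneg p hp0 U _))
      set F := fun ω => f (X ω, U ω)
      set G := fun ω => g (Y ω, U ω)
      have hnF : (0:ℝ) < ‖cvec p U F‖ := by
        rw [← sqrt_cvar p hp0]; exact Real.sqrt_pos.mpr hcf
      have hnG : (0:ℝ) < ‖cvec p U G‖ := by
        rw [← sqrt_cvar p hp0]; exact Real.sqrt_pos.mpr hcg
      have hmem : ((‖cvec p U F‖⁻¹ • cvec p U F, ‖cvec p U G‖⁻¹ • cvec p U G) : E × E)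
          ∈ KX ×ˢ KY := by
        refine Set.mk_mem_prod
          ⟨mem_sphere_zero_iff_norm.mpr (hnormalize _ hcf), Submodule.smul_mem _ _ (hmemX f)⟩
          ⟨mem_sphere_zero_iff_norm.mpr (hnormalize _ hcg), Submodule.smul_mem _ _ (hmemY g)⟩
      have hval := hq0max hmem
      simp only [Set.mem_setOf_eq] at hval
      rw [real_inner_smul_left, real_inner_smul_right, inner_cvec p hp0] at hval
      rw [sqrt_cvar p hp0, sqrt_cvar p hp0]
      calc ccov p U F G / (‖cvec p U F‖ * ‖cvec p U G‖)
          = ‖cvec p U F‖⁻¹ * (‖cvec p U G‖⁻¹ * ccov p U F G) := by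
            field_simp
        _ ≤ M := hval
    · exact hM0
  have hM1 : M = 1 := by
    refine le_antisymm ?_ ?_
    · calc M ≤ ‖q0.1‖ * ‖q0.2‖ := real_inner_le_norm q0.1 q0.2
        _ = 1 := by rw [hq1n, hq2n]; norm_num
    · rw [← h]
      exact ciSup_le fun f => ciSup_le fun g => hle f g
  -- equality in Cauchy-Schwarz
  have heqv : q0.1 = q0.2 := by
    have hsub : ‖q0.1 - q0.2‖ ^ 2 = 0 := by
      rw [norm_sub_sq_real, hq1n, hq2n, ← hM, hM1]
      norm_num
    have := pow_eq_zero_iff (n := 2) (by norm_num) |>.mp hsub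
    rwa [norm_eq_zero, sub_eq_zero] at this
  -- unpack the maximizers
  obtain ⟨F, ⟨f, hfF⟩, hFa⟩ := hq0K.1.2
  obtain ⟨G, ⟨g, hgG⟩, hGb⟩ := hq0K.2.2
  rw [cvecL_apply] at hFa hGb
  -- centered factored functions agree a.s.
  set h' : ℝ × 𝒰 → ℝ := fun q => f q - cexp p U q.2 F with hh'
  set k' : ℝ × 𝒰 → ℝ := fun q => g q - cexp p U q.2 G with hk'
  have hFh : ∀ ω, h' (X ω, U ω) = F ω - cexp p U (U ω) F := by
    intro ω; rw [hh']; dsimp only; rw [← hfF ω]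
  have hGk : ∀ ω, k' (Y ω, U ω) = G ω - cexp p U (U ω) G := by
    intro ω; rw [hk']; dsimp only; rw [← hgG ω]
  have haeq : ∀ ω, 0 < p ω → h' (X ω, U ω) = k' (Y ω, U ω) := by
    intro ω hpω
    have hcv : cvec p U F ω = cvec p U G ω := by rw [hFa, hGb, heqv]
    rw [cvec, cvec] at hcv
    have hs : Real.sqrt (p ω) ≠ 0 := by
      rw [Real.sqrt_ne_zero' ]; exact hpω
    rw [hFh ω, hGk ω]
    exact mul_left_cancel₀ hs hcv
  -- the finite alphabet
  set S : Finset ℝ := insert 0 ((Finset.univ.image fun ω => h' (X ω, U ω)) ∪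
    (Finset.univ.image fun ω => k' (Y ω, U ω))) with hS
  have h0S : (0:ℝ) ∈ S := Finset.mem_insert_self 0 _
  set f' : ℝ × 𝒰 → {r // r ∈ S} :=
    fun q => if hq : h' q ∈ S then ⟨h' q, hq⟩ else ⟨0, h0S⟩ with hf'
  set g' : ℝ × 𝒰 → {r // r ∈ S} :=
    fun q => if hq : k' q ∈ S then ⟨k' q, hq⟩ else ⟨0, h0S⟩ with hg'
  have hhS : ∀ ω, h' (X ω, U ω) ∈ S := fun ω =>
    Finset.mem_insert_of_mem (Finset.mem_union_left _
      (Finset.mem_image_of_mem _ (Finset.mem_univ ω)))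
  have hkS : ∀ ω, k' (Y ω, U ω) ∈ S := fun ω =>
    Finset.mem_insert_of_mem (Finset.mem_union_right _
      (Finset.mem_image_of_mem _ (Finset.mem_univ ω)))
  have hf'val : ∀ ω, (f' (X ω, U ω) : ℝ) = h' (X ω, U ω) := by
    intro ω; rw [hf']; dsimp only; rw [dif_pos (hhS ω)]
  have hg'val : ∀ ω, (g' (Y ω, U ω) : ℝ) = k' (Y ω, U ω) := by
    intro ω; rw [hg']; dsimp only; rw [dif_pos (hkS ω)]
  have hAE : AEEq p (fun ω => f' (X ω, U ω)) (fun ω => g' (Y ω, U ω)) := by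
    intro ω hpω
    apply Subtype.ext
    rw [hf'val ω, hg'val ω]
    exact haeq ω hpω
  -- variance is 1
  have hcvar1 : cvar p U F = 1 := by
    rw [← norm_cvec_sq p hp0, hFa, hq1n]; norm_num
  -- nondeterminism
  have hnondet : ∃ ω₁ ω₂, 0 < p ω₁ ∧ 0 < p ω₂ ∧ U ω₁ = U ω₂ ∧
      f' (X ω₁, U ω₁) ≠ f' (X ω₂, U ω₂) := by
    by_contra hcon
    push_neg at hcon
    have hzero : ∀ ω, 0 < p ω → h' (X ω, U ω) = 0 := by
      intro ω hpω
      have hm : marg p U (U ω) ≠ 0 := ne_of_gt (marg_pos p hp0 U ω hpω)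
      have hc := sum_centered p U hm F
      have hconst : ∀ ω', U ω' = U ω → 0 < p ω' → h' (X ω', U ω') = h' (X ω, U ω) := by
        intro ω' hU' hp'
        have := hcon ω' ω hp' hpω hU'
        rw [← hf'val ω', ← hf'val ω, this]
      have hterm : ∀ ω', (if U ω' = U ω then p ω' * (F ω' - cexp p U (U ω) F) else 0)
          = (if U ω' = U ω then p ω' * h' (X ω, U ω) else 0) := by
        intro ω'
        by_cases hU' : U ω' = U ω
        · rw [if_pos hU', if_pos hU']
          rcases eq_or_lt_of_le (hp0 ω') with hz | hz
          · rw [← hz]; ring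
          · rw [← hconst ω' hU' hz, hFh ω', hU']
        · rw [if_neg hU', if_neg hU']
      rw [Finset.sum_congr rfl fun ω' _ => hterm ω'] at hc
      have hfac : (∑ ω', if U ω' = U ω then p ω' * h' (X ω, U ω) else 0)
          = marg p U (U ω) * h' (X ω, U ω) := by
        rw [marg, Finset.sum_mul]
        refine Finset.sum_congr rfl fun ω' _ => ?_
        by_cases hU' : U ω' = U ω <;> simp [hU']
      rw [hfac] at hc
      rcases mul_eq_zero.mp hc with hz | hz
      · exact absurd hz hm
      · exact hz
    have : cvar p U F = 0 := by
      rw [cvar, ccov, expec]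
      refine Finset.sum_eq_zero fun ω _ => ?_
      rcases eq_or_lt_of_le (hp0 ω) with hz | hz
      · rw [← hz]; ring
      · have := hzero ω hz
        rw [hFh ω] at this
        rw [this]; ring
    rw [hcvar1] at this
    norm_num at this
  obtain ⟨ω₁, ω₂, hp1, hp2, hU12, hne⟩ := hnondet
  have hpos : 0 < condEnt p (fun ω => f' (X ω, U ω)) U :=
    condEnt_pos_of_nondet p hp0 U _ ω₁ ω₂ hp1 hp2 hU12 hne
  exact ⟨⟨{r // r ∈ S}⟩, f', g', hAE, hpos⟩

end Attain
/-- `0 ≤ |ρ(X;Y|U)| ≤ θ(X;Y|U) ≤ ρ_m(X;Y|U) ≤ 1`; moreover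
`ρ_m(X;Y|U) = 0` iff `X` and `Y` are conditionally independent given `U`, and
`ρ_m(X;Y|U) = 1` iff `X` and `Y` have (nonzero) Gács–Körner common information given `U`,
i.e. there are `f, g` with `f(X,U) = g(Y,U)` a.s. and `H(f(X,U)|U) > 0`. -/
theorem corr_le_ratio_le_maxCorr {Ω 𝒰 : Type} [Fintype Ω] [Fintype 𝒰]
    (p : Ω → ℝ) (hp : IsPMF p) (X Y : Ω → ℝ) (U : Ω → 𝒰) :
    (0 ≤ |ccorr p U X Y| ∧
     |ccorr p U X Y| ≤ cratio p U X Y ∧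
     cratio p U X Y ≤ maxCorr p U X Y ∧
     maxCorr p U X Y ≤ 1) ∧
    (maxCorr p U X Y = 0 ↔
      ∀ (x y : ℝ) (u : 𝒰),
        marg p (fun ω => (X ω, Y ω, U ω)) (x, y, u) * marg p U u =
          marg p (fun ω => (X ω, U ω)) (x, u) * marg p (fun ω => (Y ω, U ω)) (y, u)) ∧
    (maxCorr p U X Y = 1 ↔
      ∃ (𝒱 : FinAlph) (f g : ℝ × 𝒰 → 𝒱),
        AEEq p (fun ω => f (X ω, U ω)) (fun ω => g (Y ω, U ω)) ∧
        0 < condEnt p (fun ω => f (X ω, U ω)) U) := by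
  obtain ⟨hp0, -⟩ := hp
  refine ⟨⟨abs_nonneg _, abs_ccorr_le_cratio p hp0 U X Y, cratio_le_maxCorr p hp0 U X Y,
    maxCorr_le_one p hp0 U X Y⟩, ?_, ?_⟩
  · constructor
    · exact fun h x y u => indep_of_maxCorr_zero p hp0 X Y U h x y u
    · exact fun h => maxCorr_eq_zero_of_indep p hp0 X Y U h
  · constructor
    · exact fun h => common_of_maxCorr_one p hp0 X Y U h
    · rintro ⟨𝒱, f, g, hae, hent⟩
      exact maxCorr_eq_one_of_common p hp0 X Y U 𝒱 f g hae hent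

end GCI
end
end

section
/- Let X and Y be square-integrable real-valued random variables and Z, U arbitrary random variables on the same probability space. Then √( E[var(X|Z,U)]·E[var(Y|Z,U)] ) − E[cov(X,Y|Z,U)] ≤ √( E[var(X|Z)]·E[var(Y|Z)] ) − E[cov(X,Y|Z)]. In particular, taking Z constant: √( E[var(X|U)]·E[var(Y|U)] ) − E[cov(X,Y|U)] ≤ √( var(X)·var(Y) ) − cov(X,Y). -/
open MeasureTheory ProbabilityTheory

noncomputable section

namespace GCIM

variable {Ω : Type*}

/-- `E[cov(X, Y | m)]`: the expectation of the conditional covariance of `X` and `Y`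
given the sub-σ-algebra `m`. -/
def condCovM {m0 : MeasurableSpace Ω} (μ : Measure Ω) (m : MeasurableSpace Ω) (X Y : Ω → ℝ) : ℝ :=
  ∫ ω, (X ω - (μ[X|m]) ω) * (Y ω - (μ[Y|m]) ω) ∂μ

/-- `E[var(X | m)]`. -/
def condVarM {m0 : MeasurableSpace Ω} (μ : Measure Ω) (m : MeasurableSpace Ω) (X : Ω → ℝ) : ℝ :=
  condCovM μ m X X

section Aux

variable {m0 : MeasurableSpace Ω}

lemma memℒp_two_condexp (μ : Measure Ω) [IsProbabilityMeasure μ] {m : MeasurableSpace Ω}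
    (hm : m ≤ m0) {X : Ω → ℝ} (hX : MemLp X 2 μ) : MemLp (μ[X|m]) 2 μ := by
  set f := hX.toLp X with hf
  have hfX : f =ᵐ[μ] X := hX.coeFn_toLp
  have hae : (condExpL2 ℝ ℝ hm f : Ω → ℝ) =ᵐ[μ] μ[X|m] := by
    refine ae_eq_condExp_of_forall_setIntegral_eq hm (hX.integrable one_le_two) ?_ ?_ ?_
    · intro s _ hμs
      exact integrableOn_condExpL2_of_measure_ne_top hm hμs.ne f
    · intro s hs hμs
      rw [integral_condExpL2_eq hm f hs hμs.ne]
      exact integral_congr_ae (ae_restrict_of_ae hfX)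
    · exact aestronglyMeasurable_condExpL2 hm f
  exact (Lp.memLp _).ae_eq hae

lemma my_integrable_mul (μ : Measure Ω) {f g : Ω → ℝ} (hf : MemLp f 2 μ) (hg : MemLp g 2 μ) :
    Integrable (fun ω => f ω * g ω) μ := by
  have h := L2.integrable_inner (𝕜 := ℝ) (hf.toLp f) (hg.toLp g)
  refine h.congr ?_
  filter_upwards [hf.coeFn_toLp, hg.coeFn_toLp] with x hx hy
  simp [hx, hy, RCLike.inner_apply, conj_trivial, mul_comm]

lemma my_cauchy_schwarz (μ : Measure Ω) {f g : Ω → ℝ} (hf : MemLp f 2 μ) (hg : MemLp g 2 μ) :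
    ∫ x, f x * g x ∂μ ≤ Real.sqrt ((∫ x, f x * f x ∂μ) * (∫ x, g x * g x ∂μ)) := by
  set F := hf.toLp f
  set G := hg.toLp g
  have hFG : (inner ℝ F G : ℝ) = ∫ x, f x * g x ∂μ := by
    rw [L2.inner_def]
    refine integral_congr_ae ?_
    filter_upwards [hf.coeFn_toLp, hg.coeFn_toLp] with x hx hy
    simp [F, G, hx, hy, RCLike.inner_apply, conj_trivial, mul_comm]
  have hFF : (inner ℝ F F : ℝ) = ∫ x, f x * f x ∂μ := by
    rw [L2.inner_def]
    refine integral_congr_ae ?_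
    filter_upwards [hf.coeFn_toLp] with x hx
    simp [F, hx, RCLike.inner_apply, conj_trivial, pow_two]
  have hGG : (inner ℝ G G : ℝ) = ∫ x, g x * g x ∂μ := by
    rw [L2.inner_def]
    refine integral_congr_ae ?_
    filter_upwards [hg.coeFn_toLp] with x hx
    simp [G, hx, RCLike.inner_apply, conj_trivial, pow_two]
  have h1 : (inner ℝ F G : ℝ) ≤ ‖F‖ * ‖G‖ := real_inner_le_norm F G
  have h2 : ‖F‖ * ‖G‖ = Real.sqrt ((inner ℝ F F : ℝ) * (inner ℝ G G : ℝ)) := by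
    rw [real_inner_self_eq_norm_mul_norm, real_inner_self_eq_norm_mul_norm,
      Real.sqrt_mul (mul_nonneg (norm_nonneg _) (norm_nonneg _)),
      Real.sqrt_mul_self (norm_nonneg _), Real.sqrt_mul_self (norm_nonneg _)]
  rw [← hFG, ← hFF, ← hGG, ← h2]; exact h1

lemma integral_sub_condexp_mul (μ : Measure Ω) [IsProbabilityMeasure μ]
    {m : MeasurableSpace Ω} (hm : m ≤ m0)
    {X g : Ω → ℝ} (hX : MemLp X 2 μ) (hgm : StronglyMeasurable[m] g) (hg : MemLp g 2 μ) :
    ∫ ω, (X ω - (μ[X|m]) ω) * g ω ∂μ = 0 := by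
  have hEX : MemLp (μ[X|m]) 2 μ := memℒp_two_condexp μ hm hX
  set f' : Ω → ℝ := fun ω => X ω - (μ[X|m]) ω with hf'
  have hfun : f' = X - μ[X|m] := rfl
  have hXE : MemLp f' 2 μ := hX.sub hEX
  have hint : Integrable (g * f') μ := by
    have := my_integrable_mul μ hg hXE
    exact (by simpa [Pi.mul_apply, mul_comm] using this : Integrable (fun ω => g ω * f' ω) μ)
  have hXEint : Integrable f' μ := hXE.integrable one_le_two
  have hpull := condExp_mul_of_stronglyMeasurable_left (μ := μ) hgm hint hXEint
  have hzero : μ[f'|m] =ᵐ[μ] 0 := by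
    rw [hfun]
    have h1 := condExp_sub (m := m) (μ := μ) (hX.integrable one_le_two)
      (integrable_condExp (m := m) (f := X))
    have h2 : μ[μ[X|m]|m] = μ[X|m] :=
      condExp_of_stronglyMeasurable hm stronglyMeasurable_condExp integrable_condExp
    filter_upwards [h1] with ω hω
    rw [hω, h2]
    simp
  have hmu : μ[g * f'|m] =ᵐ[μ] 0 := by
    filter_upwards [hpull, hzero] with ω h1 h2
    rw [h1]
    simp only [Pi.mul_apply, h2, Pi.zero_apply, mul_zero]
  have : ∫ ω, (g * f') ω ∂μ = 0 := by
    rw [← integral_condExp hm (f := g * f'), integral_congr_ae hmu]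
    simp
  simp only [Pi.mul_apply, hf'] at this
  simpa [mul_comm] using this

lemma condCovM_decomp (μ : Measure Ω) [IsProbabilityMeasure μ]
    {m₁ m₂ : MeasurableSpace Ω} (h12 : m₁ ≤ m₂) (h2 : m₂ ≤ m0)
    {X Y : Ω → ℝ} (hX : MemLp X 2 μ) (hY : MemLp Y 2 μ) :
    condCovM μ m₁ X Y = condCovM μ m₂ X Y +
      ∫ ω, ((μ[X|m₂]) ω - (μ[X|m₁]) ω) * ((μ[Y|m₂]) ω - (μ[Y|m₁]) ω) ∂μ := by
  have h1 : m₁ ≤ m0 := h12.trans h2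
  have hEX1 : MemLp (μ[X|m₁]) 2 μ := memℒp_two_condexp μ h1 hX
  have hEX2 : MemLp (μ[X|m₂]) 2 μ := memℒp_two_condexp μ h2 hX
  have hEY1 : MemLp (μ[Y|m₁]) 2 μ := memℒp_two_condexp μ h1 hY
  have hEY2 : MemLp (μ[Y|m₂]) 2 μ := memℒp_two_condexp μ h2 hY
  set a : Ω → ℝ := fun ω => X ω - (μ[X|m₂]) ω with ha
  set a' : Ω → ℝ := fun ω => (μ[X|m₂]) ω - (μ[X|m₁]) ω with ha'
  set b : Ω → ℝ := fun ω => Y ω - (μ[Y|m₂]) ω with hb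
  set b' : Ω → ℝ := fun ω => (μ[Y|m₂]) ω - (μ[Y|m₁]) ω with hb'
  have hma : MemLp a 2 μ := hX.sub hEX2
  have hma' : MemLp a' 2 μ := hEX2.sub hEX1
  have hmb : MemLp b 2 μ := hY.sub hEY2
  have hmb' : MemLp b' 2 μ := hEY2.sub hEY1
  have hb'm : StronglyMeasurable[m₂] b' :=
    stronglyMeasurable_condExp.sub (stronglyMeasurable_condExp.mono h12)
  have ha'm : StronglyMeasurable[m₂] a' :=
    stronglyMeasurable_condExp.sub (stronglyMeasurable_condExp.mono h12)
  have hab' : ∫ ω, a ω * b' ω ∂μ = 0 := integral_sub_condexp_mul μ h2 hX hb'm hmb'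
  have ha'b : ∫ ω, a' ω * b ω ∂μ = 0 := by
    have := integral_sub_condexp_mul μ h2 hY ha'm hma'
    rw [← this]
    exact integral_congr_ae (ae_of_all μ fun ω => mul_comm _ _)
  have hptw : ∀ ω, (X ω - (μ[X|m₁]) ω) * (Y ω - (μ[Y|m₁]) ω) =
      a ω * b ω + (a ω * b' ω + (a' ω * b ω + a' ω * b' ω)) := by
    intro ω; simp only [ha, hb, ha', hb']; ring
  have hiab : Integrable (fun ω => a ω * b ω) μ := my_integrable_mul μ hma hmb
  have hiab' : Integrable (fun ω => a ω * b' ω) μ := my_integrable_mul μ hma hmb'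
  have hia'b : Integrable (fun ω => a' ω * b ω) μ := my_integrable_mul μ hma' hmb
  have hia'b' : Integrable (fun ω => a' ω * b' ω) μ := my_integrable_mul μ hma' hmb'
  have e3 : ∫ ω, (a' ω * b ω + a' ω * b' ω) ∂μ
      = (∫ ω, a' ω * b ω ∂μ) + ∫ ω, a' ω * b' ω ∂μ := integral_add hia'b hia'b'
  have e2 : ∫ ω, (a ω * b' ω + (a' ω * b ω + a' ω * b' ω)) ∂μ
      = (∫ ω, a ω * b' ω ∂μ) + ∫ ω, (a' ω * b ω + a' ω * b' ω) ∂μ :=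
    integral_add hiab' (hia'b.add hia'b')
  have e1 : ∫ ω, (a ω * b ω + (a ω * b' ω + (a' ω * b ω + a' ω * b' ω))) ∂μ
      = (∫ ω, a ω * b ω ∂μ) + ∫ ω, (a ω * b' ω + (a' ω * b ω + a' ω * b' ω)) ∂μ :=
    integral_add hiab (hiab'.add (hia'b.add hia'b'))
  calc condCovM μ m₁ X Y
      = ∫ ω, (a ω * b ω + (a ω * b' ω + (a' ω * b ω + a' ω * b' ω))) ∂μ := by
        exact integral_congr_ae (ae_of_all μ hptw)
    _ = condCovM μ m₂ X Y + ∫ ω, a' ω * b' ω ∂μ := by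
        rw [e1, e2, e3, hab', ha'b]
        simp only [add_zero, zero_add]
        rfl

lemma sqrt_gap_ineq {a b c d e : ℝ} (ha : 0 ≤ a) (hb : 0 ≤ b) (hc : 0 ≤ c) (hd : 0 ≤ d)
    (he : e ≤ Real.sqrt (c * d)) :
    Real.sqrt (a * b) + e ≤ Real.sqrt ((a + c) * (b + d)) := by
  have key : (Real.sqrt a * Real.sqrt b + Real.sqrt c * Real.sqrt d) ^ 2 ≤ (a + c) * (b + d) := by
    nlinarith [Real.sq_sqrt ha, Real.sq_sqrt hb, Real.sq_sqrt hc, Real.sq_sqrt hd,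
      sq_nonneg (Real.sqrt a * Real.sqrt d - Real.sqrt c * Real.sqrt b),
      Real.sqrt_nonneg a, Real.sqrt_nonneg b, Real.sqrt_nonneg c, Real.sqrt_nonneg d]
  have h1 : Real.sqrt a * Real.sqrt b + Real.sqrt c * Real.sqrt d
      ≤ Real.sqrt ((a + c) * (b + d)) := by
    rw [Real.le_sqrt (by positivity) (by positivity)]
    exact key
  have h2 : Real.sqrt (a * b) = Real.sqrt a * Real.sqrt b := Real.sqrt_mul ha b
  have h3 : Real.sqrt (c * d) = Real.sqrt c * Real.sqrt d := Real.sqrt_mul hc d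
  linarith [he, h1, h2.le, h3.le, h2.ge, h3.ge]

lemma gap_mono (μ : Measure Ω) [IsProbabilityMeasure μ]
    {m₁ m₂ : MeasurableSpace Ω} (h12 : m₁ ≤ m₂) (h2 : m₂ ≤ m0)
    {X Y : Ω → ℝ} (hX : MemLp X 2 μ) (hY : MemLp Y 2 μ) :
    Real.sqrt (condVarM μ m₂ X * condVarM μ m₂ Y) - condCovM μ m₂ X Y ≤
      Real.sqrt (condVarM μ m₁ X * condVarM μ m₁ Y) - condCovM μ m₁ X Y := by
  have h1 : m₁ ≤ m0 := h12.trans h2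
  have hEX1 : MemLp (μ[X|m₁]) 2 μ := memℒp_two_condexp μ h1 hX
  have hEX2 : MemLp (μ[X|m₂]) 2 μ := memℒp_two_condexp μ h2 hX
  have hEY1 : MemLp (μ[Y|m₁]) 2 μ := memℒp_two_condexp μ h1 hY
  have hEY2 : MemLp (μ[Y|m₂]) 2 μ := memℒp_two_condexp μ h2 hY
  have hma' : MemLp (fun ω => (μ[X|m₂]) ω - (μ[X|m₁]) ω) 2 μ := hEX2.sub hEX1
  have hmb' : MemLp (fun ω => (μ[Y|m₂]) ω - (μ[Y|m₁]) ω) 2 μ := hEY2.sub hEY1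
  set c : ℝ := ∫ ω, ((μ[X|m₂]) ω - (μ[X|m₁]) ω) * ((μ[X|m₂]) ω - (μ[X|m₁]) ω) ∂μ with hcc
  set d : ℝ := ∫ ω, ((μ[Y|m₂]) ω - (μ[Y|m₁]) ω) * ((μ[Y|m₂]) ω - (μ[Y|m₁]) ω) ∂μ with hdd
  set e : ℝ := ∫ ω, ((μ[X|m₂]) ω - (μ[X|m₁]) ω) * ((μ[Y|m₂]) ω - (μ[Y|m₁]) ω) ∂μ with hee
  have hdecX : condVarM μ m₁ X = condVarM μ m₂ X + c :=
    condCovM_decomp μ h12 h2 hX hX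
  have hdecY : condVarM μ m₁ Y = condVarM μ m₂ Y + d :=
    condCovM_decomp μ h12 h2 hY hY
  have hdecC : condCovM μ m₁ X Y = condCovM μ m₂ X Y + e :=
    condCovM_decomp μ h12 h2 hX hY
  have hc : 0 ≤ c := integral_nonneg fun ω => mul_self_nonneg _
  have hd : 0 ≤ d := integral_nonneg fun ω => mul_self_nonneg _
  have ha : 0 ≤ condVarM μ m₂ X := integral_nonneg fun ω => mul_self_nonneg _
  have hb : 0 ≤ condVarM μ m₂ Y := integral_nonneg fun ω => mul_self_nonneg _
  have he : e ≤ Real.sqrt (c * d) := my_cauchy_schwarz μ hma' hmb'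
  have := sqrt_gap_ineq ha hb hc hd he
  rw [hdecX, hdecY, hdecC]
  linarith

lemma condCovM_bot (μ : Measure Ω) [IsProbabilityMeasure μ] (X Y : Ω → ℝ) :
    condCovM μ ⊥ X Y = ∫ ω, (X ω - ∫ x, X x ∂μ) * (Y ω - ∫ x, Y x ∂μ) ∂μ := by
  simp only [condCovM, condExp_bot]

lemma condVarM_bot (μ : Measure Ω) [IsProbabilityMeasure μ] {X : Ω → ℝ}
    (hX : MemLp X 2 μ) : condVarM μ ⊥ X = variance X μ := by
  rw [variance_eq_integral hX.aestronglyMeasurable.aemeasurable]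
  simp only [condVarM, condCovM, condExp_bot]
  exact integral_congr_ae (ae_of_all μ fun ω => by simp [pow_two])

end Aux

/-- Conditioning reduces the covariance gap.
`√(E[var(X|Z,U)]·E[var(Y|Z,U)]) − E[cov(X,Y|Z,U)]
  ≤ √(E[var(X|Z)]·E[var(Y|Z)]) − E[cov(X,Y|Z)]`, and in particular, with `Z` constant,
`√(E[var(X|U)]·E[var(Y|U)]) − E[cov(X,Y|U)] ≤ √(var(X)·var(Y)) − cov(X,Y)`. -/
theorem conditioning_reduces_covariance_gap [MeasurableSpace Ω] {γ δ : Type*}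
    [MeasurableSpace γ] [MeasurableSpace δ]
    (μ : Measure Ω) [IsProbabilityMeasure μ]
    (X Y : Ω → ℝ) (hX : MemLp X 2 μ) (hY : MemLp Y 2 μ)
    (Z : Ω → γ) (U : Ω → δ) (hZ : Measurable Z) (hU : Measurable U) :
    (Real.sqrt
        (condVarM μ (MeasurableSpace.comap (fun ω => (Z ω, U ω)) inferInstance) X *
          condVarM μ (MeasurableSpace.comap (fun ω => (Z ω, U ω)) inferInstance) Y) -
        condCovM μ (MeasurableSpace.comap (fun ω => (Z ω, U ω)) inferInstance) X Y ≤
      Real.sqrt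
        (condVarM μ (MeasurableSpace.comap Z inferInstance) X *
          condVarM μ (MeasurableSpace.comap Z inferInstance) Y) -
        condCovM μ (MeasurableSpace.comap Z inferInstance) X Y) ∧
    (Real.sqrt
        (condVarM μ (MeasurableSpace.comap U inferInstance) X *
          condVarM μ (MeasurableSpace.comap U inferInstance) Y) -
        condCovM μ (MeasurableSpace.comap U inferInstance) X Y ≤
      Real.sqrt (variance X μ * variance Y μ) -
        ∫ ω, (X ω - ∫ x, X x ∂μ) * (Y ω - ∫ x, Y x ∂μ) ∂μ) := by
  have hZU_le : MeasurableSpace.comap (fun ω => (Z ω, U ω)) inferInstance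
      ≤ ‹MeasurableSpace Ω› := (hZ.prodMk hU).comap_le
  have hZ_le_ZU : MeasurableSpace.comap Z inferInstance
      ≤ MeasurableSpace.comap (fun ω => (Z ω, U ω)) inferInstance := by
    have heq : MeasurableSpace.comap Z inferInstance =
        MeasurableSpace.comap (fun ω => (Z ω, U ω))
          (MeasurableSpace.comap Prod.fst inferInstance) := by
      rw [MeasurableSpace.comap_comp]
      rfl
    rw [heq]
    exact MeasurableSpace.comap_mono measurable_fst.comap_le
  constructor
  · exact gap_mono μ hZ_le_ZU hZU_le hX hY
  · have h := gap_mono μ (bot_le (a := MeasurableSpace.comap U inferInstance))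
      hU.comap_le hX hY
    rwa [condVarM_bot μ hX, condVarM_bot μ hY, condCovM_bot μ X Y] at h

end GCIM
end
end
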